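/- arXiv:2112.13627 — 5 statements merged into one kernel-verified Lean document; each statement's English description precedes it below -/
import Mathlib

section
/- For all natural numbers n, the number of ordered pairs (x,y) with x < y, x + y = n, and t_x = t_y = 0 equals the number of ordered pairs (x,y) with x < y, x + y = n, and t_x = t_y = 1. (Here t is the Thue-Morse sequence.) -/
/-- The Thue-Morse sequence: t 0 = 0, t (2n) = t n, t (2n+1) = 1 - t n. -/
def tm (n : ℕ) : ℕ :=
  if h : n = 0 then 0
  else if n % 2 = 0 then tm (n / 2) else 1 - tm (n / 2)
decreasing_by all_goals exact Nat.div_lt_self (Nat.pos_of_ne_zero h) one_lt_two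

lemma tm_zero : tm 0 = 0 := by rw [tm]; simp

lemma tm_two_mul (m : ℕ) : tm (2 * m) = tm m := by
  rcases Nat.eq_zero_or_pos m with h | h
  · simp [h]
  · rw [tm]
    have h1 : 2 * m ≠ 0 := by omega
    have h2 : 2 * m % 2 = 0 := by omega
    simp [h1, h2, Nat.mul_div_cancel_left m (by norm_num : 0 < 2)]

lemma tm_two_mul_add_one (m : ℕ) : tm (2 * m + 1) = 1 - tm m := by
  rw [tm]
  have h1 : 2 * m + 1 ≠ 0 := by omega
  have h2 : (2 * m + 1) % 2 ≠ 0 := by omega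
  have h3 : (2 * m + 1) / 2 = m := by omega
  simp [h1, h2, h3]

lemma tm_le_one (n : ℕ) : tm n ≤ 1 := by
  induction n using Nat.strong_induction_on with
  | _ n ih =>
    rw [tm]
    split
    · omega
    split
    · exact ih _ (Nat.div_lt_self (Nat.pos_of_ne_zero ‹_›) one_lt_two)
    · omega

noncomputable def f (x : ℕ) : ℤ := 1 - 2 * (tm x : ℤ)

lemma f_pair (m : ℕ) : f (2 * m) + f (2 * m + 1) = 0 := by
  unfold f
  rw [tm_two_mul, tm_two_mul_add_one]
  have := tm_le_one m
  rcases Nat.le_one_iff_eq_zero_or_eq_one.mp this with h | h <;> simp [h]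

lemma sum_f_even (m : ℕ) : ∑ x ∈ Finset.range (2 * m), f x = 0 := by
  induction m with
  | zero => simp
  | succ k ih =>
    have : 2 * (k + 1) = 2 * k + 1 + 1 := by ring
    rw [this, Finset.sum_range_succ, Finset.sum_range_succ, ih]
    have := f_pair k
    linarith

lemma sum_f (n : ℕ) : ∑ x ∈ Finset.range (n + 1), f x =
    if n % 2 = 0 then f (n / 2) else 0 := by
  rcases Nat.even_or_odd n with ⟨m, hm⟩ | ⟨m, hm⟩
  · subst hm
    have h2 : m + m = 2 * m := by ring
    rw [h2, Finset.sum_range_succ, sum_f_even, zero_add]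
    have : 2 * m % 2 = 0 := by omega
    rw [if_pos this]
    have : 2 * m / 2 = m := by omega
    rw [this]
    unfold f; rw [tm_two_mul]
  · subst hm
    have h2 : 2 * m + 1 + 1 = 2 * (m + 1) := by ring
    rw [h2, sum_f_even]
    have : (2 * m + 1) % 2 ≠ 0 := by omega
    rw [if_neg this]

lemma sum_mid (n : ℕ) : ∑ x ∈ Finset.range (n + 1), (if 2 * x = n then f x else 0) =
    if n % 2 = 0 then f (n / 2) else 0 := by
  rcases Nat.even_or_odd n with ⟨m, hm⟩ | ⟨m, hm⟩
  · have hn : n = 2 * m := by omega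
    subst hn
    rw [if_pos (by omega)]
    have : ∀ x ∈ Finset.range (2 * m + 1), (if 2 * x = 2 * m then f x else 0) =
        (if x = m then f x else 0) := by
      intro x _
      congr 1
      simp only [eq_iff_iff]; omega
    rw [Finset.sum_congr rfl this, Finset.sum_ite_eq' (Finset.range (2 * m + 1)) m f,
      if_pos (by simp; omega)]
    congr 1
    omega
  · rw [if_neg (by omega)]
    apply Finset.sum_eq_zero
    intro x _
    rw [if_neg (by omega)]

lemma key (n : ℕ) :
    ((Finset.range (n+1)).filter (fun x => tm x = 0 ∧ tm (n-x) = 0 ∧ 2*x < n)).card =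
    ((Finset.range (n+1)).filter (fun x => tm x = 1 ∧ tm (n-x) = 1 ∧ 2*x < n)).card := by
  have h0 : ∀ v : ℕ,
      (((Finset.range (n+1)).filter (fun x => tm x = v ∧ tm (n-x) = v ∧ 2*x < n)).card : ℤ)
      = ∑ x ∈ Finset.range (n+1), (if tm x = v ∧ tm (n-x) = v ∧ 2*x < n then (1:ℤ) else 0) := by
    intro v
    rw [Finset.card_filter]
    push_cast
    rfl
  -- the signed sum
  have hterm : ∀ x ∈ Finset.range (n+1),
      2 * (if tm x = 0 ∧ tm (n-x) = 0 ∧ 2*x < n then (1:ℤ) else 0)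
      - 2 * (if tm x = 1 ∧ tm (n-x) = 1 ∧ 2*x < n then (1:ℤ) else 0)
      = (if 2*x < n then f x + f (n-x) else 0) := by
    intro x _
    have h1 := tm_le_one x
    have h2 := tm_le_one (n - x)
    unfold f
    rcases Nat.le_one_iff_eq_zero_or_eq_one.mp h1 with ha | ha <;>
      rcases Nat.le_one_iff_eq_zero_or_eq_one.mp h2 with hb | hb <;>
      simp [ha, hb] <;> split_ifs <;> ring
  have hsplit : ∑ x ∈ Finset.range (n+1), (if 2*x < n then f x + f (n-x) else 0)
      = ∑ x ∈ Finset.range (n+1), (if 2*x < n then f x else 0)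
      + ∑ x ∈ Finset.range (n+1), (if 2*x < n then f (n-x) else 0) := by
    rw [← Finset.sum_add_distrib]
    apply Finset.sum_congr rfl
    intro x _
    split_ifs <;> ring
  have hreflect : ∑ x ∈ Finset.range (n+1), (if 2*x < n then f (n-x) else 0)
      = ∑ x ∈ Finset.range (n+1), (if n < 2*x then f x else 0) := by
    rw [← Finset.sum_range_reflect (fun x => if n < 2*x then f x else 0) (n+1)]
    apply Finset.sum_congr rfl
    intro x hx
    simp only [Finset.mem_range] at hx
    have hx' : x ≤ n := by omega
    have : n + 1 - 1 - x = n - x := by omega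
    rw [this]
    by_cases h : 2 * x < n
    · rw [if_pos h, if_pos (by omega)]
    · rw [if_neg h, if_neg (by omega)]
  have htri : ∑ x ∈ Finset.range (n+1), (if 2*x < n then f x else 0)
      + ∑ x ∈ Finset.range (n+1), (if n < 2*x then f x else 0)
      = ∑ x ∈ Finset.range (n+1), f x
      - ∑ x ∈ Finset.range (n+1), (if 2*x = n then f x else 0) := by
    rw [← Finset.sum_add_distrib, ← Finset.sum_sub_distrib]
    apply Finset.sum_congr rfl
    intro x _
    rcases lt_trichotomy (2*x) n with h | h | h
    · rw [if_pos h, if_neg (by omega), if_neg (by omega)]; ring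
    · rw [if_neg (by omega), if_neg (by omega), if_pos h]; ring
    · rw [if_neg (by omega), if_pos h, if_neg (by omega)]; ring
  have hzero : (2 : ℤ) * (((Finset.range (n+1)).filter
        (fun x => tm x = 0 ∧ tm (n-x) = 0 ∧ 2*x < n)).card : ℤ)
      - 2 * (((Finset.range (n+1)).filter
        (fun x => tm x = 1 ∧ tm (n-x) = 1 ∧ 2*x < n)).card : ℤ) = 0 := by
    rw [h0 0, h0 1, Finset.mul_sum, Finset.mul_sum, ← Finset.sum_sub_distrib,
      Finset.sum_congr rfl hterm, hsplit, hreflect, htri, sum_f n, sum_mid n]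
    ring
  omega

lemma set_eq (n v : ℕ) :
    {p : ℕ × ℕ | tm p.1 = v ∧ tm p.2 = v ∧ p.1 < p.2 ∧ p.1 + p.2 = n} =
    ↑(((Finset.range (n+1)).filter
        (fun x => tm x = v ∧ tm (n-x) = v ∧ 2*x < n)).image (fun x => (x, n - x))) := by
  ext ⟨a, b⟩
  simp only [Set.mem_setOf_eq, Finset.coe_image, Set.mem_image, Finset.mem_coe,
    Finset.mem_filter, Finset.mem_range]
  constructor
  · rintro ⟨h1, h2, h3, h4⟩
    refine ⟨a, ⟨by omega, h1, ?_, by omega⟩, ?_⟩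
    · have : n - a = b := by omega
      rw [this]; exact h2
    · have : n - a = b := by omega
      rw [this]
  · rintro ⟨x, ⟨hx, h1, h2, h3⟩, h4⟩
    obtain ⟨rfl, rfl⟩ : x = a ∧ n - x = b := by
      constructor <;> [exact congrArg Prod.fst h4; exact congrArg Prod.snd h4]
    exact ⟨h1, h2, by omega, by omega⟩

lemma card_set (n v : ℕ) :
    Nat.card {p : ℕ × ℕ | tm p.1 = v ∧ tm p.2 = v ∧ p.1 < p.2 ∧ p.1 + p.2 = n} =
    ((Finset.range (n+1)).filter (fun x => tm x = v ∧ tm (n-x) = v ∧ 2*x < n)).card := by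
  rw [set_eq n v, Nat.card_coe_set_eq, Set.ncard_coe_finset,
    Finset.card_image_of_injective _ (fun x y h => congrArg Prod.fst h)]

/-- Dombi's theorem: for all n, the number of pairs (x,y) with x < y, x + y = n
and t x = t y = 0 equals the number of such pairs with t x = t y = 1. -/
theorem dombi (n : ℕ) :
    Nat.card {p : ℕ × ℕ | tm p.1 = 0 ∧ tm p.2 = 0 ∧ p.1 < p.2 ∧ p.1 + p.2 = n} =
    Nat.card {p : ℕ × ℕ | tm p.1 = 1 ∧ tm p.2 = 1 ∧ p.1 < p.2 ∧ p.1 + p.2 = n} := by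
  rw [card_set n 0, card_set n 1]
  exact key n
end

section
/- For all natural numbers n ≥ 1, the number of ordered pairs (x,y) with x ≤ y, x + y = n, and t'_x = t'_y = 0 equals the number of ordered pairs (x,y) with x ≤ y, x + y = n, and t'_x = t'_y = 1. (Here t' is the twisted Thue-Morse sequence.) -/
/-- The twisted Thue-Morse sequence: t' 0 = 1, t' 1 = 0, and for n ≥ 1,
t' (2n) = 1 - t' n, t' (2n+1) = t' n. -/
def ttm (n : ℕ) : ℕ :=
  if n = 0 then 1
  else if n = 1 then 0
  else if n % 2 = 0 then 1 - ttm (n / 2) else ttm (n / 2)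
decreasing_by all_goals exact Nat.div_lt_self (by omega) one_lt_two

lemma ttm_zero : ttm 0 = 1 := by rw [ttm]; norm_num
lemma ttm_one : ttm 1 = 0 := by rw [ttm]; norm_num
lemma ttm_le_one (n : ℕ) : ttm n ≤ 1 := by
  induction n using Nat.strong_induction_on with
  | _ n ih =>
    rw [ttm]
    split_ifs
    · omega
    · omega
    · omega
    · exact ih (n/2) (Nat.div_lt_self (by omega) one_lt_two)

lemma ttm_two_mul (k : ℕ) (hk : k ≠ 0) : ttm (2*k) = 1 - ttm k := by
  rw [ttm]
  have h1 : ¬ (2*k = 0) := by omega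
  have h2 : ¬ (2*k = 1) := by omega
  have h3 : 2*k % 2 = 0 := by omega
  simp [h1, h2, h3, Nat.mul_div_cancel_left k (by norm_num : 0 < 2)]

lemma ttm_two_mul_add_one (k : ℕ) (hk : k ≠ 0) : ttm (2*k+1) = ttm k := by
  rw [ttm]
  have h1 : ¬ (2*k+1 = 0) := by omega
  have h2 : ¬ (2*k+1 = 1) := by omega
  have h3 : ¬ ((2*k+1) % 2 = 0) := by omega
  have h4 : (2*k+1)/2 = k := by omega
  simp [h1, h2, h3, h4, hk]

lemma ttm_pair (k : ℕ) : ttm (2*k) + ttm (2*k+1) = 1 := by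
  rcases Nat.eq_zero_or_pos k with h | h
  · subst h; simp [ttm_zero, ttm_one]
  · rw [ttm_two_mul k (by omega), ttm_two_mul_add_one k (by omega)]
    have := ttm_le_one k; omega

def cnt (v n : ℕ) : ℕ := ((Finset.range (n/2+1)).filter fun x => ttm x = v ∧ ttm (n - x) = v).card

lemma odd_mem (m v w : ℕ) (hvw : v + w = 1) {x : ℕ}
    (hx : x ∈ (Finset.range (m+1)).filter fun x => ttm x = v ∧ ttm (2*m+1 - x) = v) :
    (if x % 2 = 0 then x + 1 else x - 1) ∈
      (Finset.range (m+1)).filter fun x => ttm x = w ∧ ttm (2*m+1 - x) = w := by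
  simp only [Finset.mem_filter, Finset.mem_range] at hx ⊢
  obtain ⟨hxm, hv1, hv2⟩ := hx
  by_cases he : x % 2 = 0
  · simp only [he, if_true]
    have e1 : ttm x + ttm (x+1) = 1 := by
      have hp := ttm_pair (x/2)
      rw [show 2*(x/2)+1 = x+1 by omega] at hp
      rw [show 2*(x/2) = x by omega] at hp
      exact hp
    have e2 : ttm (2*m - x) + ttm (2*m+1-x) = 1 := by
      have hp := ttm_pair (m - x/2)
      rw [show 2*(m-x/2)+1 = 2*m+1-x by omega] at hp
      rw [show 2*(m-x/2) = 2*m-x by omega] at hp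
      exact hp
    have hxm' : x ≠ m := by
      intro h
      subst h
      rw [show 2*x+1-x = x+1 by omega] at hv2
      omega
    refine ⟨by omega, by omega, ?_⟩
    rw [show 2*m+1-(x+1) = 2*m - x by omega]
    omega
  · simp only [he, if_false]
    have hx1 : 1 ≤ x := by omega
    have e1 : ttm (x-1) + ttm x = 1 := by
      have hp := ttm_pair (x/2)
      rw [show 2*(x/2)+1 = x by omega] at hp
      rw [show 2*(x/2) = x-1 by omega] at hp
      exact hp
    have e2 : ttm (2*m+1-x) + ttm (2*m+2-x) = 1 := by
      have hp := ttm_pair (m - x/2)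
      rw [show 2*(m-x/2)+1 = 2*m+2-x by omega] at hp
      rw [show 2*(m-x/2) = 2*m+1-x by omega] at hp
      exact hp
    refine ⟨by omega, by omega, ?_⟩
    rw [show 2*m+1-(x-1) = 2*m+2-x by omega]
    omega

lemma cnt_odd (m : ℕ) : cnt 0 (2*m+1) = cnt 1 (2*m+1) := by
  unfold cnt
  rw [show (2*m+1)/2 = m by omega]
  refine Finset.card_nbij' (fun x => if x % 2 = 0 then x + 1 else x - 1)
    (fun x => if x % 2 = 0 then x + 1 else x - 1)
    (fun a ha => odd_mem m 0 1 rfl ha) (fun a ha => odd_mem m 1 0 rfl ha) ?_ ?_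
  · intro a _
    by_cases h : a % 2 = 0
    · have h2 : ¬ ((a+1) % 2 = 0) := by omega
      simp [h, h2]
    · have h2 : (a-1) % 2 = 0 := by omega
      simp [h, h2]
      omega
  · intro a _
    by_cases h : a % 2 = 0
    · have h2 : ¬ ((a+1) % 2 = 0) := by omega
      simp [h, h2]
    · have h2 : (a-1) % 2 = 0 := by omega
      simp [h, h2]
      omega

lemma split_card (k x0 : ℕ) (h : x0 < k) (P : ℕ → Prop) [DecidablePred P] :
    ((Finset.range k).filter P).card =
    ((Finset.range k).filter fun x => P x ∧ x ≠ x0).card + (if P x0 then 1 else 0) := by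
  by_cases h0 : P x0
  · have heq : (Finset.range k).filter P
        = insert x0 ((Finset.range k).filter fun x => P x ∧ x ≠ x0) := by
      ext a
      simp only [Finset.mem_filter, Finset.mem_range, Finset.mem_insert]
      constructor
      · rintro ⟨ha, hP⟩
        by_cases hax : a = x0
        · exact Or.inl hax
        · exact Or.inr ⟨ha, hP, hax⟩
      · rintro (rfl | ⟨ha, hP, _⟩)
        · exact ⟨h, h0⟩
        · exact ⟨ha, hP⟩
    rw [heq, Finset.card_insert_of_notMem (by simp)]
    simp [h0]
  · have heq : ((Finset.range k).filter fun x => P x ∧ x ≠ x0) = (Finset.range k).filter P := by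
      apply Finset.filter_congr
      intro x hx
      constructor
      · exact fun hx' => hx'.1
      · intro hx'
        refine ⟨hx', fun hxx => h0 (hxx ▸ hx')⟩
    rw [heq]
    simp [h0]

lemma bij_even (v m : ℕ) (hv : v ≤ 1) (hm : 1 ≤ m) :
    ((Finset.range (m+1)).filter fun x => ((ttm x = v ∧ ttm (2*m - x) = v) ∧ x % 2 = 0) ∧ x ≠ 0).card =
    ((Finset.range (m/2+1)).filter fun a => (ttm a = 1 - v ∧ ttm (m - a) = 1 - v) ∧ a ≠ 0).card := by
  refine Finset.card_nbij' (fun x => x / 2) (fun a => 2 * a) ?_ ?_ ?_ ?_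
  · intro x hx
    simp only [Finset.mem_coe, Finset.mem_filter, Finset.mem_range] at hx ⊢
    obtain ⟨hxm, ⟨⟨h1, h2⟩, he⟩, hne⟩ := hx
    have e1 := ttm_two_mul (x/2) (by omega)
    rw [show 2*(x/2) = x by omega] at e1
    have e2 := ttm_two_mul (m - x/2) (by omega)
    rw [show 2*(m - x/2) = 2*m - x by omega] at e2
    have b0 := ttm_le_one (x/2)
    have b1 := ttm_le_one (m - x/2)
    exact ⟨by omega, ⟨by omega, by omega⟩, by omega⟩
  · intro a ha
    simp only [Finset.mem_coe, Finset.mem_filter, Finset.mem_range] at ha ⊢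
    obtain ⟨ham, ⟨h1, h2⟩, hne⟩ := ha
    have e1 := ttm_two_mul a hne
    have e2 := ttm_two_mul (m - a) (by omega)
    rw [show 2*(m-a) = 2*m - 2*a by omega] at e2
    have b0 := ttm_le_one a
    have b1 := ttm_le_one (m-a)
    exact ⟨by omega, ⟨⟨by omega, by omega⟩, by omega⟩, by omega⟩
  · intro x hx
    simp only [Finset.mem_coe, Finset.mem_filter, Finset.mem_range] at hx
    dsimp only
    omega
  · intro a _
    dsimp only
    omega

lemma bij_odd (v m : ℕ) (hm : 1 ≤ m) :
    ((Finset.range (m+1)).filter fun x => ((ttm x = v ∧ ttm (2*m - x) = v) ∧ ¬ x % 2 = 0) ∧ x ≠ 1).card =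
    ((Finset.range ((m-1)/2+1)).filter fun a => (ttm a = v ∧ ttm (m - 1 - a) = v) ∧ a ≠ 0).card := by
  refine Finset.card_nbij' (fun x => x / 2) (fun a => 2 * a + 1) ?_ ?_ ?_ ?_
  · intro x hx
    simp only [Finset.mem_coe, Finset.mem_filter, Finset.mem_range] at hx ⊢
    obtain ⟨hxm, ⟨⟨h1, h2⟩, he⟩, hne⟩ := hx
    have e1 := ttm_two_mul_add_one (x/2) (by omega)
    rw [show 2*(x/2)+1 = x by omega] at e1
    have e2 := ttm_two_mul_add_one (m - 1 - x/2) (by omega)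
    rw [show 2*(m - 1 - x/2)+1 = 2*m - x by omega] at e2
    exact ⟨by omega, ⟨by omega, by omega⟩, by omega⟩
  · intro a ha
    simp only [Finset.mem_coe, Finset.mem_filter, Finset.mem_range] at ha ⊢
    obtain ⟨ham, ⟨h1, h2⟩, hne⟩ := ha
    have e1 := ttm_two_mul_add_one a hne
    have e2 := ttm_two_mul_add_one (m - 1 - a) (by omega)
    rw [show 2*(m - 1 - a)+1 = 2*m - (2*a+1) by omega] at e2
    exact ⟨by omega, ⟨⟨by omega, by omega⟩, by omega⟩, by omega⟩
  · intro x hx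
    simp only [Finset.mem_coe, Finset.mem_filter, Finset.mem_range] at hx
    dsimp only
    omega
  · intro a _
    dsimp only
    omega

lemma cnt_two_mul (v m : ℕ) (hv : v ≤ 1) (hm : 1 ≤ m) :
    cnt v (2*m) + (if ttm 0 = 1 - v ∧ ttm (m - 0) = 1 - v then 1 else 0)
      + (if ttm 0 = v ∧ ttm (m - 1 - 0) = v then 1 else 0)
    = cnt (1-v) m + cnt v (m-1)
      + (if (ttm 0 = v ∧ ttm (2*m - 0) = v) ∧ 0 % 2 = 0 then 1 else 0)
      + (if (ttm 1 = v ∧ ttm (2*m - 1) = v) ∧ ¬ 1 % 2 = 0 then 1 else 0) := by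
  have hc : cnt v (2*m) = ((Finset.range (m+1)).filter fun x => ttm x = v ∧ ttm (2*m - x) = v).card := by
    unfold cnt
    rw [show (2*m)/2 = m by omega]
  have hsplit := Finset.card_filter_add_card_filter_not
    (s := (Finset.range (m+1)).filter fun x => ttm x = v ∧ ttm (2*m - x) = v) (p := fun x => x % 2 = 0)
  rw [Finset.filter_filter, Finset.filter_filter] at hsplit
  have hE := split_card (m+1) 0 (by omega) (fun x => (ttm x = v ∧ ttm (2*m - x) = v) ∧ x % 2 = 0)
  have hO := split_card (m+1) 1 (by omega) (fun x => (ttm x = v ∧ ttm (2*m - x) = v) ∧ ¬ x % 2 = 0)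
  have hbe := bij_even v m hv hm
  have hbo := bij_odd v m hm
  have hT := split_card (m/2+1) 0 (by omega) (fun a => ttm a = 1 - v ∧ ttm (m - a) = 1 - v)
  have hU := split_card ((m-1)/2+1) 0 (by omega) (fun a => ttm a = v ∧ ttm (m - 1 - a) = v)
  have hc1 : cnt (1-v) m = ((Finset.range (m/2+1)).filter fun a => ttm a = 1 - v ∧ ttm (m - a) = 1 - v).card := rfl
  have hc2 : cnt v (m-1) = ((Finset.range ((m-1)/2+1)).filter fun a => ttm a = v ∧ ttm (m - 1 - a) = v).card := rfl
  rw [hc, ← hsplit]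
  omega

lemma base2 : cnt 0 2 = cnt 1 2 := by
  have h2 : ttm 2 = 1 := by
    have := ttm_two_mul 1 one_ne_zero
    norm_num [ttm_one] at this
    exact this
  have e0 : (Finset.range 2).filter (fun x => ttm x = 0 ∧ ttm (2 - x) = 0) = {1} := by
    ext a
    simp only [Finset.mem_filter, Finset.mem_range, Finset.mem_singleton]
    constructor
    · rintro ⟨ha, h1', h2'⟩
      interval_cases a
      · rw [ttm_zero] at h1'; omega
      · rfl
    · rintro rfl
      exact ⟨by norm_num, by rw [ttm_one], by norm_num [ttm_one]⟩
  have e1 : (Finset.range 2).filter (fun x => ttm x = 1 ∧ ttm (2 - x) = 1) = {0} := by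
    ext a
    simp only [Finset.mem_filter, Finset.mem_range, Finset.mem_singleton]
    constructor
    · rintro ⟨ha, h1', h2'⟩
      interval_cases a
      · rfl
      · rw [ttm_one] at h1'; omega
    · rintro rfl
      exact ⟨by norm_num, by rw [ttm_zero], by norm_num [h2]⟩
  unfold cnt
  norm_num [e0, e1]

lemma key_s1 : ∀ n, 1 ≤ n → cnt 0 n = cnt 1 n := by
  intro n
  induction n using Nat.strong_induction_on with
  | _ n ih =>
    intro hn
    rcases Nat.even_or_odd n with he | ho
    · obtain ⟨m, hm⟩ := he
      have hm1 : 1 ≤ m := by omega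
      rcases eq_or_lt_of_le hm1 with h1 | h2
      · rw [show n = 2 by omega]
        exact base2
      · have h0 := cnt_two_mul 0 m (by omega) (by omega)
        have h1 := cnt_two_mul 1 m (by omega) (by omega)
        have ihm := ih m (by omega) (by omega)
        have ihm1 := ih (m-1) (by omega) (by omega)
        have e2m : ttm (2*m) = 1 - ttm m := ttm_two_mul m (by omega)
        have e2m1 : ttm (2*m - 1) = ttm (m-1) := by
          have := ttm_two_mul_add_one (m-1) (by omega)
          rw [show 2*(m-1)+1 = 2*m - 1 by omega] at this
          exact this
        have bm := ttm_le_one m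
        have bm1 := ttm_le_one (m-1)
        rw [show n = 2*m by omega]
        norm_num [ttm_zero, ttm_one, e2m, e2m1] at h0 h1
        split_ifs at h0 h1 <;> omega
    · obtain ⟨m, hm⟩ := ho
      rw [show n = 2*m+1 by omega]
      exact cnt_odd m

/-- Chen–Wang theorem: for all n ≥ 1, the number of pairs (x,y) with x ≤ y, x + y = n
and t' x = t' y = 0 equals the number of such pairs with t' x = t' y = 1. -/
theorem chen_wang (n : ℕ) (hn : 1 ≤ n) :
    Nat.card {p : ℕ × ℕ | ttm p.1 = 0 ∧ ttm p.2 = 0 ∧ p.1 ≤ p.2 ∧ p.1 + p.2 = n} =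
    Nat.card {p : ℕ × ℕ | ttm p.1 = 1 ∧ ttm p.2 = 1 ∧ p.1 ≤ p.2 ∧ p.1 + p.2 = n} := by
  have hset : ∀ v : ℕ, {p : ℕ × ℕ | ttm p.1 = v ∧ ttm p.2 = v ∧ p.1 ≤ p.2 ∧ p.1 + p.2 = n} =
      ↑(((Finset.range (n/2+1)).filter fun x => ttm x = v ∧ ttm (n - x) = v).image
        fun x => (x, n - x)) := by
    intro v
    ext ⟨x, y⟩
    simp only [Set.mem_setOf_eq, Finset.coe_image, Set.mem_image, Finset.mem_coe,
      Finset.mem_filter, Finset.mem_range, Prod.mk.injEq]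
    constructor
    · rintro ⟨h1, h2, h3, h4⟩
      exact ⟨x, ⟨by omega, h1, by rw [show n - x = y by omega]; exact h2⟩, rfl, by omega⟩
    · rintro ⟨a, ⟨ha, h1, h2⟩, rfl, rfl⟩
      exact ⟨h1, h2, by omega, by omega⟩
  have hinj : Function.Injective (fun x : ℕ => (x, n - x)) := by
    intro a b h
    simpa using congrArg Prod.fst h
  rw [hset 0, hset 1, Nat.card_coe_set_eq, Nat.card_coe_set_eq,
    Set.ncard_coe_finset, Set.ncard_coe_finset,
    Finset.card_image_of_injective _ hinj, Finset.card_image_of_injective _ hinj]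
  exact key_s1 n hn
end

section
/- The twisted Thue-Morse sequence t' is computed by the 3-state DFAO with states {0,1,2}, initial state 0, outputs out(0)=1, out(1)=0, out(2)=1, and transitions δ(0,0)=0, δ(0,1)=1, δ(1,0)=2, δ(1,1)=1, δ(2,0)=1, δ(2,1)=2, reading the binary representation of n most-significant-digit first: for all n, t'_n = out(δ*(0, binary representation of n)). -/
/-- Transition function of the DFAO. -/
def dfaoDelta : ℕ → ℕ → ℕ
  | 0, 0 => 0
  | 0, 1 => 1
  | 1, 0 => 2
  | 1, 1 => 1
  | 2, 0 => 1
  | 2, 1 => 2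
  | q, _ => q

/-- Output function of the DFAO. -/
def dfaoOut : ℕ → ℕ
  | 0 => 1
  | 1 => 0
  | 2 => 1
  | _ => 0

def st (n : ℕ) : ℕ := ((Nat.digits 2 n).reverse).foldl dfaoDelta 0

lemma st_succ (n : ℕ) (h : n ≠ 0) : st n = dfaoDelta (st (n / 2)) (n % 2) := by
  unfold st
  rw [Nat.digits_def' (by norm_num) (Nat.pos_of_ne_zero h)]
  simp [List.foldl_append]

lemma key_s10 : ∀ n, n ≠ 0 → (st n = 1 ∨ st n = 2) ∧ ttm n = dfaoOut (st n) := by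
  intro n
  induction n using Nat.strong_induction_on with
  | _ n ih =>
    intro hn
    rcases eq_or_ne n 1 with rfl | h1
    · have h1 : st 1 = 1 := by simp [st, dfaoDelta]
      refine ⟨Or.inl h1, ?_⟩
      rw [ttm]; simp [h1, dfaoOut]
    · have h2 : 2 ≤ n := by omega
      have hd := ih (n / 2) (Nat.div_lt_self (by omega) one_lt_two) (by omega)
      have hst := st_succ n hn
      have httm : ttm n = if n % 2 = 0 then 1 - ttm (n / 2) else ttm (n / 2) := by
        rw [ttm]; simp [hn, h1]
      have hm : n % 2 = 0 ∨ n % 2 = 1 := by omega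
      rcases hd with ⟨hs, he⟩
      rcases hs with hs | hs <;> rcases hm with hm | hm <;>
        simp [hst, hs, hm, httm, he, dfaoDelta, dfaoOut]

/-- The twisted Thue-Morse sequence is computed by the 3-state DFAO, reading the
binary representation of n most-significant-digit first. -/
theorem ttm_dfao (n : ℕ) :
    ttm n = dfaoOut (((Nat.digits 2 n).reverse).foldl dfaoDelta 0) := by
  rcases eq_or_ne n 0 with rfl | h
  · show ttm 0 = dfaoOut (List.foldl dfaoDelta 0 (Nat.digits 2 0).reverse)
    rw [ttm]; simp [dfaoOut]
  · exact (key_s10 n h).2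
end

section
/- The sequence n ↦ R_2^{(A)}(n) has a rank-5 linear representation in base 2: there exist u ∈ ℚ^{1×5}, v ∈ ℚ^{5×1}, and matrices M_0, M_1 ∈ ℚ^{5×5} given explicitly by u = (1,0,0,0,0), v = (0,0,0,1,0)^T, M_0 = [[1,0,0,0,0],[0,0,1,0,0],[0,0,0,0,1],[0,-1,0,1,1],[-2,-1,3,1,0]], M_1 = [[0,1,0,0,0],[0,0,0,1,0],[-1,0,1,1,0],[-2,1,1,0,1],[-1,-1,0,2,1]], such that for every n and every binary representation x = x_1 x_2 ... x_k of n (most significant digit first, leading zeros allowed), R_2^{(A)}(n) = u · M_{x_1} · M_{x_2} ⋯ M_{x_k} · v. -/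
noncomputable def R2A (n : ℕ) : ℕ :=
  Nat.card {p : ℕ × ℕ | tm p.1 = 0 ∧ tm p.2 = 0 ∧ p.1 < p.2 ∧ p.1 + p.2 = n}

def M0 : Matrix (Fin 5) (Fin 5) ℚ :=
  !![1, 0, 0, 0, 0;
     0, 0, 1, 0, 0;
     0, 0, 0, 0, 1;
     0, -1, 0, 1, 1;
     -2, -1, 3, 1, 0]

def M1 : Matrix (Fin 5) (Fin 5) ℚ :=
  !![0, 1, 0, 0, 0;
     0, 0, 0, 1, 0;
     -1, 0, 1, 1, 0;
     -2, 1, 1, 0, 1;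
     -1, -1, 0, 2, 1]

def uRow : Matrix (Fin 1) (Fin 5) ℚ := !![1, 0, 0, 0, 0]

def vCol : Matrix (Fin 5) (Fin 1) ℚ := !![0; 0; 0; 1; 0]

lemma tm_even (n : ℕ) : tm (2 * n) = tm n := by
  rcases Nat.eq_zero_or_pos n with h | h
  · simp [h]
  · rw [tm]
    have : ¬ (2 * n = 0) := by omega
    simp [this, Nat.mul_div_cancel_left n two_pos, Nat.mul_mod_right]

lemma tm_odd (n : ℕ) : tm (2 * n + 1) = 1 - tm n := by
  rw [tm]
  have h1 : ¬ (2 * n + 1 = 0) := by omega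
  have h2 : (2 * n + 1) % 2 = 1 := by omega
  have h3 : (2 * n + 1) / 2 = n := by omega
  simp [h1, h2, h3]

/-! ### Auxiliary sequences -/

noncomputable section

def aq (n : ℕ) : ℚ := if tm n = 0 then 1 else 0
def sqA (n : ℕ) : ℚ := ∑ x ∈ Finset.range (n+1), aq x * aq (n - x)
def tq (n : ℕ) : ℚ := ∑ x ∈ Finset.range (n+1), aq x
def dq (n : ℕ) : ℚ := if n % 2 = 0 then aq (n/2) else 0
def rq (n : ℕ) : ℚ := (sqA n - dq n)/2

lemma aq_even (n : ℕ) : aq (2*n) = aq n := by simp [aq, tm_even]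

lemma aq_odd (n : ℕ) : aq (2*n+1) = 1 - aq n := by
  have h := tm_le_one n
  unfold aq
  rw [tm_odd]
  interval_cases h : tm n <;> simp

lemma tq_succ (n : ℕ) : tq (n+1) = tq n + aq (n+1) := by
  simp [tq, Finset.sum_range_succ]

lemma sum_range_double (f : ℕ → ℚ) (n : ℕ) :
    ∑ x ∈ Finset.range (2*n), f x = ∑ i ∈ Finset.range n, (f (2*i) + f (2*i+1)) := by
  induction n with
  | zero => simp
  | succ n ih =>
    have : 2 * (n+1) = (2*n) + 1 + 1 := by ring
    rw [this, Finset.sum_range_succ, Finset.sum_range_succ, ih, Finset.sum_range_succ]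
    ring

lemma tq_odd (n : ℕ) : tq (2*n+1) = n+1 := by
  have : (2*n+1)+1 = 2*(n+1) := by ring
  rw [tq, this, sum_range_double]
  have : ∀ i ∈ Finset.range (n+1), aq (2*i) + aq (2*i+1) = 1 := by
    intro i _; rw [aq_even, aq_odd]; ring
  rw [Finset.sum_congr rfl this]
  simp

lemma tq_even2 (n : ℕ) : tq (2*n+2) = (n+1) + aq (n+1) := by
  have h : 2*n+2 = (2*n+1)+1 := by ring
  rw [h, tq_succ, tq_odd]
  have : 2*n+1+1 = 2*(n+1) := by ring
  rw [this, aq_even]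

lemma sq_odd (n : ℕ) : sqA (2*n+1) = 2 * tq n - 2 * sqA n := by
  have h : (2*n+1)+1 = 2*(n+1) := by ring
  rw [sqA, h, sum_range_double]
  have : ∀ i ∈ Finset.range (n+1),
      aq (2*i) * aq (2*n+1 - 2*i) + aq (2*i+1) * aq (2*n+1 - (2*i+1))
      = aq i + aq (n - i) - 2 * (aq i * aq (n - i)) := by
    intro i hi
    rw [Finset.mem_range] at hi
    have e1 : 2*n+1 - 2*i = 2*(n-i)+1 := by omega
    have e2 : 2*n+1 - (2*i+1) = 2*(n-i) := by omega
    rw [e1, e2, aq_even, aq_odd, aq_even, aq_odd]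
    ring
  rw [Finset.sum_congr rfl this]
  have hrefl : ∑ i ∈ Finset.range (n+1), aq (n - i) = tq n := by
    rw [tq, ← Finset.sum_range_reflect]
    apply Finset.sum_congr rfl
    intro i hi
    rw [Finset.mem_range] at hi
    congr 1
    omega
  rw [Finset.sum_sub_distrib, Finset.sum_add_distrib, hrefl, ← Finset.mul_sum]
  rw [show (∑ i ∈ Finset.range (n+1), aq i * aq (n - i)) = sqA n from rfl]
  rw [show (∑ i ∈ Finset.range (n+1), aq i) = tq n from rfl]
  ring

lemma sq_even2 (n : ℕ) : sqA (2*n+2) = sqA (n+1) + sqA n + (n+1) - 2 * tq n := by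
  have h : (2*n+2)+1 = 2*(n+1)+1 := by ring
  rw [sqA, h, Finset.sum_range_succ, sum_range_double]
  have : ∀ i ∈ Finset.range (n+1),
      aq (2*i) * aq (2*n+2 - 2*i) + aq (2*i+1) * aq (2*n+2 - (2*i+1))
      = aq i * aq (n+1-i) + (1 - aq i - aq (n-i) + aq i * aq (n - i)) := by
    intro i hi
    rw [Finset.mem_range] at hi
    have e1 : 2*n+2 - 2*i = 2*(n+1-i) := by omega
    have e2 : 2*n+2 - (2*i+1) = 2*(n-i)+1 := by omega
    rw [e1, e2, aq_even, aq_odd, aq_even, aq_odd]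
    ring
  rw [Finset.sum_congr rfl this, Finset.sum_add_distrib, Finset.sum_add_distrib,
      Finset.sum_sub_distrib, Finset.sum_sub_distrib]
  have hrefl : ∑ i ∈ Finset.range (n+1), aq (n - i) = tq n := by
    rw [tq, ← Finset.sum_range_reflect]
    apply Finset.sum_congr rfl
    intro i hi
    rw [Finset.mem_range] at hi
    congr 1
    omega
  have htail : aq (2*(n+1)) * aq (2*n+2 - 2*(n+1)) = aq (n+1) := by
    have e2 : 2*n+2 - 2*(n+1) = 0 := by omega
    rw [e2, aq_even]
    simp [aq, tm_zero]
  have hfirst : sqA (n+1) = (∑ i ∈ Finset.range (n+1), aq i * aq (n+1-i)) + aq (n+1) := by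
    rw [sqA, Finset.sum_range_succ, Nat.sub_self]
    simp [aq, tm_zero]
  have hcount : (∑ i ∈ Finset.range (n+1), (1:ℚ)) = n+1 := by simp
  rw [hrefl, hcount, htail,
      show (∑ i ∈ Finset.range (n+1), aq i * aq (n - i)) = sqA n from rfl,
      show (∑ i ∈ Finset.range (n+1), aq i) = tq n from rfl]
  linear_combination -hfirst

lemma dq_even (n : ℕ) : dq (2*n) = aq n := by
  simp [dq, Nat.mul_div_cancel_left n two_pos, Nat.mul_mod_right]

lemma dq_odd (n : ℕ) : dq (2*n+1) = 0 := by
  have : (2*n+1) % 2 = 1 := by omega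
  simp [dq, this]

/-! ### Counting: `R2A` in terms of `sqA` -/

def pairSet (n : ℕ) : Finset (ℕ × ℕ) :=
  (Finset.range (n+1) ×ˢ Finset.range (n+1)).filter
    (fun p => tm p.1 = 0 ∧ tm p.2 = 0 ∧ p.1 + p.2 = n)

lemma mem_pairSet {n : ℕ} {p : ℕ × ℕ} :
    p ∈ pairSet n ↔ tm p.1 = 0 ∧ tm p.2 = 0 ∧ p.1 + p.2 = n := by
  simp only [pairSet, Finset.mem_filter, Finset.mem_product, Finset.mem_range]
  constructor
  · tauto
  · intro h
    exact ⟨⟨by omega, by omega⟩, h⟩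

lemma R2A_card (n : ℕ) :
    R2A n = ((pairSet n).filter (fun p => p.1 < p.2)).card := by
  rw [R2A]
  have hset : {p : ℕ × ℕ | tm p.1 = 0 ∧ tm p.2 = 0 ∧ p.1 < p.2 ∧ p.1 + p.2 = n}
      = ↑((pairSet n).filter (fun p => p.1 < p.2)) := by
    ext p
    simp only [Set.mem_setOf_eq, Finset.coe_filter, Set.mem_setOf_eq, mem_pairSet]
    tauto
  rw [hset, Nat.card_coe_set_eq, Set.ncard_coe_finset]

lemma pairSet_card_eq_sum (n : ℕ) :
    ((pairSet n).card : ℚ) = sqA n := by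
  have hbij : (pairSet n).card
      = ((Finset.range (n+1)).filter (fun x => tm x = 0 ∧ tm (n-x) = 0)).card := by
    apply Finset.card_nbij' (i := fun p => p.1) (j := fun x => (x, n - x))
    · intro p hp
      rw [Finset.mem_coe, mem_pairSet] at hp
      simp only [Finset.mem_coe, Finset.mem_filter, Finset.mem_range]
      refine ⟨by omega, hp.1, ?_⟩
      have : n - p.1 = p.2 := by omega
      rw [this]; exact hp.2.1
    · intro x hx
      simp only [Finset.mem_coe, Finset.mem_filter, Finset.mem_range] at hx
      rw [Finset.mem_coe, mem_pairSet]
      exact ⟨hx.2.1, hx.2.2, by dsimp only; omega⟩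
    · intro p hp
      rw [Finset.mem_coe, mem_pairSet] at hp
      have : n - p.1 = p.2 := by omega
      simp [this]
    · intro x hx
      rfl
  rw [hbij, Finset.card_filter, sqA]
  push_cast
  apply Finset.sum_congr rfl
  intro x _
  unfold aq
  split_ifs with h1 h2 h3 h4 <;> simp_all

lemma pairSet_split (n : ℕ) :
    (pairSet n).card
      = 2 * ((pairSet n).filter (fun p => p.1 < p.2)).card
        + (if n % 2 = 0 ∧ tm (n/2) = 0 then 1 else 0) := by
  classical
  have h1 : ((pairSet n).filter (fun p => p.1 < p.2)).card
      + ((pairSet n).filter (fun p => ¬ p.1 < p.2)).card = (pairSet n).card :=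
    Finset.card_filter_add_card_filter_not _
  have h2 : ((pairSet n).filter (fun p => ¬ p.1 < p.2))
      = ((pairSet n).filter (fun p => p.2 < p.1)) ∪ ((pairSet n).filter (fun p => p.1 = p.2)) := by
    rw [← Finset.filter_or]
    apply Finset.filter_congr
    intro p _
    constructor
    · intro h; omega
    · intro h; omega
  have h3 : Disjoint ((pairSet n).filter (fun p => p.2 < p.1))
      ((pairSet n).filter (fun p => p.1 = p.2)) := by
    apply Finset.disjoint_filter_filter'
    rw [disjoint_iff_inf_le]
    intro p hp
    simp only [Pi.inf_apply, inf_Prop_eq] at hp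
    omega
  have h4 : ((pairSet n).filter (fun p => p.2 < p.1)).card
      = ((pairSet n).filter (fun p => p.1 < p.2)).card := by
    apply Finset.card_nbij' (i := fun p => p.swap) (j := fun p => p.swap)
    · intro p hp
      simp only [Finset.mem_coe, Finset.mem_filter, mem_pairSet, Prod.fst_swap, Prod.snd_swap] at hp ⊢
      exact ⟨⟨hp.1.2.1, hp.1.1, by omega⟩, hp.2⟩
    · intro p hp
      simp only [Finset.mem_coe, Finset.mem_filter, mem_pairSet, Prod.fst_swap, Prod.snd_swap] at hp ⊢
      exact ⟨⟨hp.1.2.1, hp.1.1, by omega⟩, hp.2⟩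
    · intro p _; exact Prod.swap_swap p
    · intro p _; exact Prod.swap_swap p
  have h5 : ((pairSet n).filter (fun p => p.1 = p.2)).card
      = (if n % 2 = 0 ∧ tm (n/2) = 0 then 1 else 0) := by
    split_ifs with h
    · rw [Finset.card_eq_one]
      refine ⟨(n/2, n/2), ?_⟩
      ext p
      simp only [Finset.mem_filter, mem_pairSet, Finset.mem_singleton, Prod.ext_iff]
      constructor
      · rintro ⟨⟨_, _, hsum⟩, heq⟩
        constructor <;> omega
      · rintro ⟨ha, hb⟩
        refine ⟨⟨?_, ?_, ?_⟩, ?_⟩ <;> simp [ha, hb, h.2] <;> omega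
    · rw [Finset.card_eq_zero]
      ext p
      simp only [Finset.mem_filter, mem_pairSet, Finset.notMem_empty, iff_false]
      rintro ⟨⟨ht1, ht2, hsum⟩, heq⟩
      apply h
      have he : n % 2 = 0 := by omega
      have : p.1 = n / 2 := by omega
      exact ⟨he, by rw [← this]; exact ht1⟩
  rw [← h1, h2, Finset.card_union_of_disjoint h3, h4, h5]
  ring

lemma R2A_cast (n : ℕ) : (R2A n : ℚ) = rq n := by
  have h := pairSet_split n
  have hd : dq n = (if n % 2 = 0 ∧ tm (n/2) = 0 then (1:ℚ) else 0) := by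
    unfold dq aq
    by_cases h2 : n % 2 = 0
    · by_cases h3 : tm (n/2) = 0 <;> simp [h2, h3]
    · simp [h2]
  have hc : ((pairSet n).card : ℚ)
      = 2 * (((pairSet n).filter (fun p => p.1 < p.2)).card : ℚ)
        + (if n % 2 = 0 ∧ tm (n/2) = 0 then (1:ℚ) else 0) := by
    rw [h]
    push_cast
    split_ifs <;> simp
  rw [rq, ← pairSet_card_eq_sum, hc, ← hd, R2A_card n]
  ring

/-! ### Reduction lemmas for `rq` -/

lemma dq_even2 (k : ℕ) : dq (2*k+2) = aq (k+1) := by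
  rw [show 2*k+2 = 2*(k+1) from by ring, dq_even]

lemma rqL1 (k : ℕ) : rq (2*k+2) = (sqA (k+1) + sqA k + ((k:ℚ)+1) - 2*tq k - aq (k+1))/2 := by
  rw [rq, sq_even2, dq_even2]

lemma rqL2 (k : ℕ) : rq (2*k+3) = tq k + aq (k+1) - sqA (k+1) := by
  rw [rq, show 2*k+3 = 2*(k+1)+1 from by ring, sq_odd, dq_odd, tq_succ]
  ring

lemma rqL3 (k : ℕ) : rq (4*k+4) = (sqA (k+1) - sqA k + ((k:ℚ)+1) - aq (k+1))/2 := by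
  rw [rq, show 4*k+4 = 2*(2*k+1)+2 from by ring, sq_even2,
      show 2*k+1+1 = 2*k+2 from by ring, sq_even2, sq_odd, tq_odd,
      show 2*(2*k+1)+2 = 2*(2*k+2) from by ring, dq_even,
      show 2*k+2 = 2*(k+1) from by ring, aq_even]
  push_cast
  ring

lemma rqL4 (k : ℕ) : rq (4*k+5) = aq (k+1) - sqA (k+1) - sqA k + 2*tq k := by
  rw [rq, show 4*k+5 = 2*(2*k+2)+1 from by ring, sq_odd, dq_odd, tq_even2, sq_even2]
  push_cast
  ring

lemma rqL5 (k : ℕ) : rq (4*k+6) = (- sqA (k+1) + sqA k + ((k:ℚ)+1) + aq (k+1))/2 := by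
  rw [rq, show 4*k+6 = 2*(2*k+2)+2 from by ring, sq_even2,
      show 2*k+2+1 = 2*(k+1)+1 from by ring, sq_odd, tq_succ, sq_even2, tq_even2,
      show 2*(2*k+2)+2 = 2*(2*k+3) from by ring, dq_even,
      show 2*k+3 = 2*(k+1)+1 from by ring, aq_odd]
  push_cast
  ring

lemma rqL6 (k : ℕ) : rq (4*k+7) = 2 + (k:ℚ) - 2*tq k - 2*aq (k+1) + 2*sqA (k+1) := by
  rw [rq, show 4*k+7 = 2*(2*k+3)+1 from by ring, sq_odd, dq_odd,
      show 2*k+3 = 2*(k+1)+1 from by ring, tq_odd, sq_odd, tq_succ]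
  push_cast
  ring

lemma rqL7 (k : ℕ) : rq (8*k+9) = 1 + (k:ℚ) + aq (k+1) - sqA (k+1) + sqA k := by
  rw [rq, show 8*k+9 = 2*(4*k+4)+1 from by ring, sq_odd, dq_odd,
      show 4*k+4 = 2*(2*k+1)+2 from by ring, sq_even2, tq_even2,
      show 2*k+1+1 = 2*k+2 from by ring, sq_even2, sq_odd, tq_odd,
      show 2*k+2 = 2*(k+1) from by ring, aq_even]
  push_cast
  ring

lemma rqL8 (k : ℕ) : rq (8*k+13) = 2 + (k:ℚ) - aq (k+1) + sqA (k+1) - sqA k := by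
  rw [rq, show 8*k+13 = 2*(4*k+6)+1 from by ring, sq_odd, dq_odd,
      show 4*k+6 = 2*(2*k+2)+2 from by ring, sq_even2, tq_even2,
      show 2*k+2+1 = 2*(k+1)+1 from by ring, sq_odd, tq_succ, sq_even2, tq_even2, aq_odd]
  push_cast
  ring

/-! ### Small values -/

lemma aq_zero : aq 0 = 1 := by simp [aq, tm_zero]
lemma aq_one : aq 1 = 0 := by
  rw [show (1:ℕ) = 2*0+1 from rfl, aq_odd, aq_zero]; norm_num
lemma aq_two : aq 2 = 0 := by rw [show (2:ℕ) = 2*1 from rfl, aq_even, aq_one]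
lemma aq_three : aq 3 = 1 := by
  rw [show (3:ℕ) = 2*1+1 from rfl, aq_odd, aq_one]; norm_num
lemma aq_four : aq 4 = 0 := by rw [show (4:ℕ) = 2*2 from rfl, aq_even, aq_two]
lemma aq_five : aq 5 = 1 := by
  rw [show (5:ℕ) = 2*2+1 from rfl, aq_odd, aq_two]; norm_num

lemma rq_zero : rq 0 = 0 := by
  have hs : sqA 0 = 1 := by simp [sqA, aq_zero]
  have hd : dq 0 = 1 := by simp [dq, aq_zero]
  rw [rq, hs, hd]; norm_num
lemma rq_one : rq 1 = 0 := by
  have hs : sqA 1 = 0 := by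
    simp [sqA, Finset.sum_range_succ, aq_zero, aq_one]
  have hd : dq 1 = 0 := by simp [dq]
  rw [rq, hs, hd]; norm_num
lemma rq_two : rq 2 = 0 := by
  have hs : sqA 2 = 0 := by
    simp [sqA, Finset.sum_range_succ, aq_zero, aq_one, aq_two]
  have hd : dq 2 = 0 := by
    rw [show (2:ℕ) = 2*1 from rfl, dq_even, aq_one]
  rw [rq, hs, hd]; norm_num
lemma rq_three : rq 3 = 1 := by
  have hs : sqA 3 = 2 := by
    simp [sqA, Finset.sum_range_succ, aq_zero, aq_one, aq_two, aq_three]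
    norm_num
  have hd : dq 3 = 0 := by
    rw [show (3:ℕ) = 2*1+1 from rfl, dq_odd]
  rw [rq, hs, hd]; norm_num
lemma rq_five : rq 5 = 1 := by
  have hs : sqA 5 = 2 := by
    simp [sqA, Finset.sum_range_succ, aq_zero, aq_one, aq_two, aq_three, aq_four, aq_five]
    norm_num
  have hd : dq 5 = 0 := by
    rw [show (5:ℕ) = 2*2+1 from rfl, dq_odd]
  rw [rq, hs, hd]; norm_num

/-! ### The vector sequence -/

def Wv (n : ℕ) : Matrix (Fin 1) (Fin 5) ℚ :=
  !![1 - 2*rq n + rq (2*n) - rq (2*n+1),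
     3*rq n - 2*rq (2*n) + 2*rq (2*n+1) - rq (4*n+1),
     -rq n - rq (2*n+1) + rq (4*n+1),
     rq n,
     rq (2*n) - rq n]

lemma Wv_zero : Wv 0 = uRow := by
  ext i j
  fin_cases i
  fin_cases j <;> norm_num [Wv, uRow, rq_zero, rq_one]

lemma Wv_vCol (n : ℕ) : (Wv n * vCol) 0 0 = rq n := by
  simp [Wv, vCol, Matrix.mul_apply, Fin.sum_univ_five]

lemma Wv_step0_succ (k : ℕ) : Wv (k+1) * M0 = Wv (2*k+2) := by
  ext i j
  fin_cases i
  fin_cases j <;>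
  · simp [Wv, M0, Matrix.mul_apply, Fin.sum_univ_five, Matrix.vecHead, Matrix.vecTail]
    try simp only [show 2*(k+1) = 2*k+2 from by ring, show 2*(k+1)+1 = 2*k+3 from by ring,
        show 2*k+2+1 = 2*k+3 from by ring,
        show 4*(k+1)+1 = 4*k+5 from by ring,
        show 2*(2*k+2) = 4*k+4 from by ring, show 4*k+4+1 = 4*k+5 from by ring,
        show 2*(2*k+2)+1 = 4*k+5 from by ring,
        show 4*(2*k+2)+1 = 8*k+9 from by ring]
    try simp only [rqL1, rqL2, rqL3, rqL4, rqL7]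
    try simp only [rq]
    try push_cast
    try ring

lemma Wv_step1_succ (k : ℕ) : Wv (k+1) * M1 = Wv (2*k+3) := by
  ext i j
  fin_cases i
  fin_cases j <;>
  · simp [Wv, M1, Matrix.mul_apply, Fin.sum_univ_five, Matrix.vecHead, Matrix.vecTail]
    try simp only [show 2*(k+1) = 2*k+2 from by ring, show 2*(k+1)+1 = 2*k+3 from by ring,
        show 2*k+2+1 = 2*k+3 from by ring,
        show 4*(k+1)+1 = 4*k+5 from by ring,
        show 2*(2*k+3) = 4*k+6 from by ring, show 4*k+6+1 = 4*k+7 from by ring,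
        show 2*(2*k+3)+1 = 4*k+7 from by ring,
        show 4*(2*k+3)+1 = 8*k+13 from by ring]
    try simp only [rqL1, rqL2, rqL4, rqL5, rqL6, rqL8]
    try simp only [rq]
    try push_cast
    try ring

lemma Wv_step0_zero : Wv 0 * M0 = Wv 0 := by
  ext i j
  fin_cases i
  fin_cases j <;>
  · simp [Wv, M0, Matrix.mul_apply, Fin.sum_univ_five, Matrix.vecHead, Matrix.vecTail]
    try norm_num [rq_zero, rq_one]

lemma Wv_step1_zero : Wv 0 * M1 = Wv 1 := by
  ext i j
  fin_cases i
  fin_cases j <;>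
  · simp [Wv, M1, Matrix.mul_apply, Fin.sum_univ_five, Matrix.vecHead, Matrix.vecTail]
    try norm_num [rq_zero, rq_one, rq_two, rq_three, rq_five]

lemma Wv_step (a : ℕ) (d : Fin 2) :
    Wv a * (if d = 0 then M0 else M1) = Wv (2*a + (d:ℕ)) := by
  fin_cases d
  · simp only [if_pos rfl, Fin.val_zero, Nat.add_zero]
    rcases a with _ | k
    · simpa using Wv_step0_zero
    · rw [show 2*(k+1) = 2*k+2 from by ring]
      exact Wv_step0_succ k
  · have hne : (1 : Fin 2) ≠ 0 := by decide
    simp only [if_neg hne, Fin.val_one]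
    rcases a with _ | k
    · simpa using Wv_step1_zero
    · rw [show 2*(k+1)+1 = 2*k+3 from by ring]
      exact Wv_step1_succ k

end

/-- R₂^(A) has the rank-5 linear representation (u, M₀/M₁, v) in base 2: for every
binary word x (msd first, leading zeros allowed) representing n, the product
u · M_{x₁} ⋯ M_{x_k} · v equals R₂^(A)(n). -/
theorem r2a_linear_representation (n : ℕ) (x : List (Fin 2))
    (hx : x.foldl (fun a d => 2 * a + (d : ℕ)) 0 = n) :
    (uRow * (x.map (fun d => if d = 0 then M0 else M1)).prod * vCol) 0 0 = R2A n := by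
  have key : ∀ (x : List (Fin 2)) (a : ℕ),
      Wv a * (x.map (fun d => if d = 0 then M0 else M1)).prod
        = Wv (x.foldl (fun a d => 2 * a + (d : ℕ)) a) := by
    intro x
    induction x with
    | nil => intro a; simp
    | cons d xs ih =>
      intro a
      have hf : ((d :: xs : List (Fin 2)).foldl (fun a d => 2 * a + (d : ℕ)) a)
          = (xs.foldl (fun a d => 2 * a + (d : ℕ)) (2*a + (d:ℕ))) := by simp
      rw [List.map_cons, List.prod_cons, hf, ← Matrix.mul_assoc, Wv_step a d]
      exact ih _
  have h := key x 0
  rw [hx] at h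
  rw [← Wv_zero, h, Wv_vCol, R2A_cast]
end

section
/- For the evil/odious partition of ℕ given by the Thue-Morse sequence, R_3^{(A)}(n) − R_3^{(B)}(n) = e_A(n) − e_B(n), where e_A(n) = 1 if n is even and t_{n/2} = 0 (else 0) and e_B(n) = 1 if n is even and t_{n/2} = 1 (else 0). In particular R_3^{(A)} and R_3^{(B)} differ at infinitely many n. -/
noncomputable def R3A (n : ℕ) : ℕ :=
  Nat.card {p : ℕ × ℕ | tm p.1 = 0 ∧ tm p.2 = 0 ∧ p.1 ≤ p.2 ∧ p.1 + p.2 = n}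

noncomputable def R3B (n : ℕ) : ℕ :=
  Nat.card {p : ℕ × ℕ | tm p.1 = 1 ∧ tm p.2 = 1 ∧ p.1 ≤ p.2 ∧ p.1 + p.2 = n}

def sg (n : ℕ) : ℤ := if tm n = 0 then 1 else -1

lemma sg_pair (k : ℕ) : sg (2*k) + sg (2*k+1) = 0 := by
  have h1 := tm_two_mul k
  have h2 := tm_two_mul_add_one k
  have h3 := tm_le_one k
  unfold sg
  rw [h1, h2]
  have : tm k = 0 ∨ tm k = 1 := by omega
  rcases this with h | h <;> simp [h]

lemma sg_two_mul (m : ℕ) : sg (2*m) = sg m := by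
  unfold sg; rw [tm_two_mul]

lemma sum_sg_even (m : ℕ) : ∑ x ∈ Finset.range (2*m), sg x = 0 := by
  induction m with
  | zero => simp
  | succ m ih =>
    have h : 2*(m+1) = 2*m + 1 + 1 := by ring
    rw [h, Finset.sum_range_succ, Finset.sum_range_succ, ih]
    have := sg_pair m; linarith

lemma R3_card (n v : ℕ) :
    Nat.card {p : ℕ × ℕ | tm p.1 = v ∧ tm p.2 = v ∧ p.1 ≤ p.2 ∧ p.1 + p.2 = n} =
    ((Finset.range (n/2+1)).filter (fun x => tm x = v ∧ tm (n-x) = v)).card := by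
  have hset : {p : ℕ × ℕ | tm p.1 = v ∧ tm p.2 = v ∧ p.1 ≤ p.2 ∧ p.1 + p.2 = n} =
      ↑(((Finset.range (n/2+1)).filter (fun x => tm x = v ∧ tm (n-x) = v)).image
        (fun x => (x, n - x))) := by
    ext ⟨x, y⟩
    simp only [Set.mem_setOf_eq, Finset.coe_image, Set.mem_image, Finset.mem_coe,
      Finset.mem_filter, Finset.mem_range, Prod.mk.injEq]
    constructor
    · rintro ⟨h1, h2, h3, h4⟩
      have hy : n - x = y := by omega
      exact ⟨x, ⟨by omega, h1, by rw [hy]; exact h2⟩, rfl, hy⟩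
    · rintro ⟨a, ⟨ha, h1, h2⟩, rfl, rfl⟩
      exact ⟨h1, h2, by omega, by omega⟩
  rw [hset, Nat.card_coe_set_eq, Set.ncard_coe_finset,
    Finset.card_image_of_injective _ (fun a b h => congrArg Prod.fst h)]

lemma half_full (n v : ℕ) :
    ∑ x ∈ Finset.range (n+1), (if tm x = v ∧ tm (n-x) = v then (1:ℤ) else 0) =
    2 * (∑ x ∈ Finset.range (n/2+1), (if tm x = v ∧ tm (n-x) = v then (1:ℤ) else 0)) -
    (if Even n ∧ tm (n/2) = v then 1 else 0) := by
  set g : ℕ → ℤ := fun x => if tm x = v ∧ tm (n-x) = v then (1:ℤ) else 0 with hg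
  have hsym : ∀ x ∈ Finset.Ico (n/2+1) (n+1), g x = g (n - x) := by
    intro x hx
    simp only [Finset.mem_Ico] at hx
    have : n - (n - x) = x := by omega
    simp only [hg, this, and_comm]
  have hsplit : ∑ x ∈ Finset.range (n+1), g x =
      ∑ x ∈ Finset.range (n/2+1), g x + ∑ x ∈ Finset.Ico (n/2+1) (n+1), g x := by
    rw [Finset.range_eq_Ico, Finset.range_eq_Ico]
    exact (Finset.sum_Ico_consecutive g (Nat.zero_le (n/2+1)) (show n/2+1 ≤ n+1 by omega)).symm
  have hrefl : ∑ x ∈ Finset.Ico (n/2+1) (n+1), g x =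
      ∑ x ∈ Finset.range (n + 1 - (n/2+1)), g x := by
    rw [Finset.sum_congr rfl hsym, Finset.sum_Ico_reflect g _ (le_refl (n+1)),
      Nat.sub_self, ← Finset.range_eq_Ico]
  rcases Nat.even_or_odd n with he | ho
  · obtain ⟨m, hm⟩ := he
    have hn : n = 2 * m := by omega
    subst hn
    have h1 : 2*m/2 = m := by omega
    have h2 : 2*m + 1 - (2*m/2+1) = m := by omega
    have h3 : 2*m - m = m := by omega
    rw [hsplit, hrefl, h2, h1]
    have h4 : ∑ x ∈ Finset.range (m+1), g x = ∑ x ∈ Finset.range m, g x + g m :=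
      Finset.sum_range_succ g m
    have h5 : g m = if Even (2*m) ∧ tm m = v then 1 else 0 := by
      simp [hg, h3, even_two_mul]
    rw [h4, h5]
    ring
  · have hne : ¬ Even n := by simp [Nat.not_even_iff_odd.mpr ho]
    obtain ⟨m, hm⟩ := ho
    have h1 : n/2 = m := by omega
    have h2 : n + 1 - (n/2+1) = m + 1 := by omega
    rw [hsplit, hrefl, h2, h1]
    simp [hne]
    ring

lemma main_id (n : ℕ) : (R3A n : ℤ) - (R3B n : ℤ) =
    (if Even n ∧ tm (n / 2) = 0 then 1 else 0) -
    (if Even n ∧ tm (n / 2) = 1 then 1 else 0) := by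
  have hcast : ∀ v : ℕ,
      ((((Finset.range (n/2+1)).filter (fun x => tm x = v ∧ tm (n-x) = v)).card : ℤ))
      = ∑ x ∈ Finset.range (n/2+1), (if tm x = v ∧ tm (n-x) = v then (1:ℤ) else 0) := by
    intro v
    rw [Finset.card_filter]
    push_cast
    rfl
  have hA : (R3A n : ℤ) = ∑ x ∈ Finset.range (n/2+1),
      (if tm x = 0 ∧ tm (n-x) = 0 then (1:ℤ) else 0) := by
    rw [R3A, R3_card n 0]; exact hcast 0
  have hB : (R3B n : ℤ) = ∑ x ∈ Finset.range (n/2+1),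
      (if tm x = 1 ∧ tm (n-x) = 1 then (1:ℤ) else 0) := by
    rw [R3B, R3_card n 1]; exact hcast 1
  have hdiff : ∑ x ∈ Finset.range (n+1),
        ((if tm x = 0 ∧ tm (n-x) = 0 then (1:ℤ) else 0) -
         (if tm x = 1 ∧ tm (n-x) = 1 then (1:ℤ) else 0)) =
      ∑ x ∈ Finset.range (n+1), sg x := by
    have key : ∀ x, 2 * ((if tm x = 0 ∧ tm (n-x) = 0 then (1:ℤ) else 0) -
        (if tm x = 1 ∧ tm (n-x) = 1 then (1:ℤ) else 0)) = sg x + sg (n - x) := by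
      intro x
      have h1 : tm x = 0 ∨ tm x = 1 := by have := tm_le_one x; omega
      have h2 : tm (n-x) = 0 ∨ tm (n-x) = 1 := by have := tm_le_one (n-x); omega
      unfold sg
      rcases h1 with h1 | h1 <;> rcases h2 with h2 | h2 <;> simp [h1, h2]
    have hrefl : ∑ x ∈ Finset.range (n+1), sg (n - x) = ∑ x ∈ Finset.range (n+1), sg x := by
      have := Finset.sum_range_reflect sg (n+1)
      simpa using this
    have h2 : 2 * ∑ x ∈ Finset.range (n+1),
        ((if tm x = 0 ∧ tm (n-x) = 0 then (1:ℤ) else 0) -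
         (if tm x = 1 ∧ tm (n-x) = 1 then (1:ℤ) else 0)) =
        2 * ∑ x ∈ Finset.range (n+1), sg x := by
      calc 2 * ∑ x ∈ Finset.range (n+1),
            ((if tm x = 0 ∧ tm (n-x) = 0 then (1:ℤ) else 0) -
             (if tm x = 1 ∧ tm (n-x) = 1 then (1:ℤ) else 0))
          = ∑ x ∈ Finset.range (n+1),
              2 * ((if tm x = 0 ∧ tm (n-x) = 0 then (1:ℤ) else 0) -
                   (if tm x = 1 ∧ tm (n-x) = 1 then (1:ℤ) else 0)) := Finset.mul_sum _ _ _
        _ = ∑ x ∈ Finset.range (n+1), (sg x + sg (n - x)) :=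
            Finset.sum_congr rfl (fun x _ => key x)
        _ = ∑ x ∈ Finset.range (n+1), sg x + ∑ x ∈ Finset.range (n+1), sg (n - x) :=
            Finset.sum_add_distrib
        _ = 2 * ∑ x ∈ Finset.range (n+1), sg x := by rw [hrefl]; ring
    linarith
  have hsg : ∑ x ∈ Finset.range (n+1), sg x =
      (if Even n ∧ tm (n / 2) = 0 then 1 else 0) -
      (if Even n ∧ tm (n / 2) = 1 then 1 else 0) := by
    rcases Nat.even_or_odd n with he | ho
    · obtain ⟨m, hm⟩ := he
      have hn : n = 2 * m := by omega
      subst hn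
      have h1 : 2*m/2 = m := by omega
      rw [Finset.sum_range_succ, sum_sg_even, sg_two_mul, h1, zero_add]
      have : tm m = 0 ∨ tm m = 1 := by have := tm_le_one m; omega
      rcases this with h | h <;> simp [sg, h, even_two_mul]
    · have hne : ¬ Even n := by simp [Nat.not_even_iff_odd.mpr ho]
      obtain ⟨m, hm⟩ := ho
      have : n + 1 = 2 * (m + 1) := by omega
      rw [this, sum_sg_even]
      simp [hne]
  have h0 := half_full n 0
  have h1 := half_full n 1
  rw [hA, hB]
  rw [Finset.sum_sub_distrib] at hdiff
  linarith [hdiff, hsg, h0, h1]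

lemma infinite_ne : {n : ℕ | R3A n ≠ R3B n}.Infinite := by
  apply Set.infinite_of_injective_forall_mem
    (f := fun m : ℕ => 2 * m) (mul_right_injective₀ two_ne_zero)
  intro m
  simp only [Set.mem_setOf_eq]
  intro h
  have hmain := main_id (2 * m)
  rw [h] at hmain
  have he : Even (2 * m) := even_two_mul m
  have h1 : 2 * m / 2 = m := by omega
  rw [h1] at hmain
  have : tm m = 0 ∨ tm m = 1 := by have := tm_le_one m; omega
  rcases this with ht | ht <;> simp [he, ht] at hmain

theorem r3_evil_odious_difference :
    (∀ n : ℕ, (R3A n : ℤ) - (R3B n : ℤ) =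
      (if Even n ∧ tm (n / 2) = 0 then 1 else 0) -
      (if Even n ∧ tm (n / 2) = 1 then 1 else 0)) ∧
    {n : ℕ | R3A n ≠ R3B n}.Infinite :=
  ⟨main_id, infinite_ne⟩
end
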